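/- arXiv:1603.06725 — 10 statements merged into one kernel-verified Lean document; each statement's English description precedes it below -/
import Mathlib

section
/- If {y_n}_{n≥0} is a log-convex sequence of positive reals, then the sequence z_n = Σ_{m=0}^n [n m] y_m, where [n m] denotes the unsigned Stirling numbers of the first kind, is also log-convex. -/
open Polynomial Finset

noncomputable def Pasc (n : ℕ) : Polynomial ℝ :=
  ∏ i ∈ Finset.range n, (Polynomial.X + Polynomial.C (i : ℝ))

lemma Pasc_succ (n : ℕ) : Pasc (n + 1) = Pasc n * (X + C (n : ℝ)) := by
  rw [Pasc, Finset.prod_range_succ]; rfl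

lemma Pasc_coeff_nonneg (n m : ℕ) : 0 ≤ (Pasc n).coeff m := by
  induction n generalizing m with
  | zero =>
    simp [Pasc, Polynomial.coeff_one]
    split <;> norm_num
  | succ n ih =>
    rw [Pasc_succ, mul_add, coeff_add, coeff_mul_C]
    have h1 : 0 ≤ (Pasc n * X).coeff m := by
      cases m with
      | zero => simp [coeff_mul_X_zero]
      | succ k => rw [coeff_mul_X]; exact ih k
    have h2 : 0 ≤ (Pasc n).coeff m * (n : ℝ) := mul_nonneg (ih m) (Nat.cast_nonneg n)
    linarith

lemma Pasc_natDegree_le (n : ℕ) : (Pasc n).natDegree ≤ n := by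
  refine (Polynomial.natDegree_prod_le _ _).trans ?_
  calc ∑ i ∈ range n, (X + C (i : ℝ)).natDegree ≤ ∑ i ∈ range n, 1 := by
        refine Finset.sum_le_sum fun i _ => ?_
        exact (Polynomial.natDegree_X_add_C _).le
    _ = n := by simp

lemma Pasc_coeff_hi (n m : ℕ) (h : n < m) : (Pasc n).coeff m = 0 :=
  Polynomial.coeff_eq_zero_of_natDegree_lt (lt_of_le_of_lt (Pasc_natDegree_le n) h)

lemma Pasc_coeff_succ (n m : ℕ) :
    (Pasc (n + 1)).coeff m =
      (n : ℝ) * (Pasc n).coeff m + (Pasc n * X).coeff m := by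
  rw [Pasc_succ, mul_add, coeff_add, coeff_mul_C]; ring

/-- The unsigned Stirling numbers of the first kind `S n m`, characterized by
`x(x+1)⋯(x+n−1) = Σ_{m=0}^n S n m * x^m`. If `y` is a positive log-convex
sequence, then its Stirling transform of the first kind is log-convex. -/
theorem stmt_1 (S : ℕ → ℕ → ℝ)
    (hS : ∀ (n : ℕ) (x : ℝ),
      ∏ i ∈ Finset.range n, (x + i) = ∑ m ∈ Finset.range (n + 1), S n m * x ^ m)
    (y : ℕ → ℝ) (hy : ∀ n, 0 < y n)
    (hlc : ∀ j : ℕ, 1 ≤ j → (y j) ^ 2 ≤ y (j - 1) * y (j + 1)) :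
    ∀ j : ℕ, 1 ≤ j →
      (∑ m ∈ Finset.range (j + 1), S j m * y m) ^ 2 ≤
        (∑ m ∈ Finset.range (j - 1 + 1), S (j - 1) m * y m) *
          (∑ m ∈ Finset.range (j + 2), S (j + 1) m * y m) := by
  -- identify S with coefficients of Pasc
  have hid : ∀ n m, m ≤ n → S n m = (Pasc n).coeff m := by
    intro n m hm
    have hpq : Pasc n = ∑ k ∈ range (n + 1), C (S n k) * X ^ k := by
      apply Polynomial.funext
      intro x
      rw [Pasc]
      simp only [eval_finset_sum, eval_prod, eval_add, eval_X, eval_C, eval_mul, eval_pow]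
      exact hS n x
    rw [hpq, finset_sum_coeff]
    rw [Finset.sum_eq_single m]
    · simp
    · intro k _ hk
      simp only [coeff_C_mul, coeff_X_pow]
      rw [if_neg (fun h => hk h.symm)]
      ring
    · intro h
      exact absurd (Finset.mem_range.mpr (Nat.lt_succ_of_le hm)) h
  -- the Stirling transform as a function of y
  set A : ℕ → (ℕ → ℝ) → ℝ := fun n w => ∑ m ∈ range (n + 1), (Pasc n).coeff m * w m with hA
  have hsum : ∀ n (w : ℕ → ℝ), ∑ m ∈ range (n + 1), S n m * w m = A n w := by
    intro n w
    refine Finset.sum_congr rfl fun m hm => ?_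
    rw [hid n m (Nat.lt_succ_iff.mp (Finset.mem_range.mp hm))]
  -- recurrence
  have hrec : ∀ n (w : ℕ → ℝ), A (n + 1) w = (n : ℝ) * A n w + A n (fun m => w (m + 1)) := by
    intro n w
    have : A (n + 1) w = ∑ m ∈ range (n + 2),
        ((n : ℝ) * (Pasc n).coeff m * w m + (Pasc n * X).coeff m * w m) := by
      refine Finset.sum_congr rfl fun m _ => ?_
      rw [Pasc_coeff_succ]; ring
    rw [this, Finset.sum_add_distrib]
    congr 1
    · rw [Finset.sum_range_succ, Pasc_coeff_hi n (n + 1) (by omega)]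
      rw [Finset.mul_sum]
      simp [mul_assoc]
    · rw [Finset.sum_range_succ']
      simp only [coeff_mul_X, coeff_mul_X_zero, zero_mul, add_zero]
      rfl
  -- positivity/nonnegativity
  have hAnn : ∀ n (w : ℕ → ℝ), (∀ m, 0 ≤ w m) → 0 ≤ A n w := by
    intro n w hw
    exact Finset.sum_nonneg fun m _ => mul_nonneg (Pasc_coeff_nonneg n m) (hw m)
  -- Cauchy-Schwarz step
  have hCS : ∀ n, (A n (fun m => y (m + 1))) ^ 2 ≤ A n y * A n (fun m => y (m + 2)) := by
    intro n
    have key : (∑ m ∈ range (n + 1),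
        (Pasc n).coeff m * Real.sqrt (y m * y (m + 2))) ^ 2 ≤
        A n y * A n (fun m => y (m + 2)) := by
      refine Finset.sum_sq_le_sum_mul_sum_of_sq_eq_mul _ ?_ ?_ ?_
      · intro m _; exact mul_nonneg (Pasc_coeff_nonneg n m) (hy m).le
      · intro m _; exact mul_nonneg (Pasc_coeff_nonneg n m) (hy (m + 2)).le
      · intro m _
        have h0 : 0 ≤ y m * y (m + 2) := mul_nonneg (hy m).le (hy (m + 2)).le
        rw [mul_pow, Real.sq_sqrt h0]; ring
    refine le_trans ?_ key
    have hle : A n (fun m => y (m + 1)) ≤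
        ∑ m ∈ range (n + 1), (Pasc n).coeff m * Real.sqrt (y m * y (m + 2)) := by
      refine Finset.sum_le_sum fun m _ => ?_
      refine mul_le_mul_of_nonneg_left ?_ (Pasc_coeff_nonneg n m)
      have := hlc (m + 1) (by omega)
      simp only [Nat.add_sub_cancel] at this
      have : y (m + 1) ^ 2 ≤ y m * y (m + 2) := by
        convert this using 3 <;> omega
      nlinarith [Real.sq_sqrt (mul_nonneg (hy m).le (hy (m + 2)).le),
        Real.sqrt_nonneg (y m * y (m + 2)), (hy (m + 1)).le]
    have h0 : 0 ≤ A n (fun m => y (m + 1)) := hAnn n _ fun m => (hy (m + 1)).le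
    exact pow_le_pow_left₀ h0 hle 2
  -- final
  intro j hj
  obtain ⟨k, rfl⟩ : ∃ k, j = k + 1 := ⟨j - 1, by omega⟩
  simp only [Nat.add_sub_cancel]
  rw [hsum, hsum, show (k + 1) + 2 = (k + 1 + 1) + 1 from rfl, hsum]
  set p := A k y
  set q := A k (fun m => y (m + 1))
  set r := A k (fun m => y (m + 2))
  have h1 : A (k + 1) y = (k : ℝ) * p + q := hrec k y
  have h2 : A (k + 1 + 1) y = (k + 1 : ℝ) * A (k + 1) y + A (k + 1) (fun m => y (m + 1)) := by
    have := hrec (k + 1) y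
    push_cast at this ⊢
    linarith
  have h3 : A (k + 1) (fun m => y (m + 1)) = (k : ℝ) * q + r := by
    have := hrec k (fun m => y (m + 1))
    exact this
  have hp : 0 ≤ p := hAnn k y fun m => (hy m).le
  have hq : 0 ≤ q := hAnn k _ fun m => (hy (m + 1)).le
  have hqr : q ^ 2 ≤ p * r := hCS k
  rw [h2, h1, h3]
  have hk0 : (0:ℝ) ≤ (k:ℝ) := Nat.cast_nonneg k
  nlinarith [hqr, hp, hq, hk0, mul_nonneg hk0 (sq_nonneg p), mul_nonneg hp hq]
end

section
/- For every positive integer k, the sequence ω_n^{(k)} = Σ_{m=0}^n [n m] / (m+1)^k (n ≥ 0) is log-convex: for all n ≥ 1, (ω_n^{(k)})^2 ≤ ω_{n-1}^{(k)} ω_{n+1}^{(k)}. -/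
noncomputable def Tst : ℕ → ℕ → ℝ
  | 0, 0 => 1
  | 0, _ + 1 => 0
  | n + 1, 0 => n * Tst n 0
  | n + 1, m + 1 => Tst n m + n * Tst n (m + 1)

lemma Tst_nonneg : ∀ n m, 0 ≤ Tst n m := by
  intro n
  induction n with
  | zero => intro m; cases m <;> simp [Tst]
  | succ n ih =>
    intro m
    cases m with
    | zero => simpa [Tst] using mul_nonneg (by positivity) (ih 0)
    | succ m =>
      simp only [Tst]
      have := ih m
      have := ih (m+1)
      positivity

lemma Tst_zero : ∀ n m, n < m → Tst n m = 0 := by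
  intro n
  induction n with
  | zero => intro m hm; cases m with
            | zero => omega
            | succ m => simp [Tst]
  | succ n ih =>
    intro m hm
    cases m with
    | zero => omega
    | succ m =>
      simp only [Tst]
      rw [ih m (by omega), ih (m+1) (by omega)]
      ring

lemma sum_succ_Tst (n : ℕ) (f : ℕ → ℝ) :
    ∑ m ∈ Finset.range (n + 2), Tst (n + 1) m * f m =
      ∑ m ∈ Finset.range (n + 1), Tst n m * f (m + 1) +
        n * ∑ m ∈ Finset.range (n + 1), Tst n m * f m := by
  rw [Finset.sum_range_succ' (fun m => Tst (n + 1) m * f m)]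
  have h1 : ∀ m, Tst (n + 1) (m + 1) = Tst n m + n * Tst n (m + 1) := fun m => rfl
  have h0 : Tst (n + 1) 0 = n * Tst n 0 := rfl
  simp only [h1, h0, add_mul]
  rw [Finset.sum_add_distrib]
  have h2 : ∑ m ∈ Finset.range (n + 1), n * Tst n (m + 1) * f (m + 1) =
      n * ∑ m ∈ Finset.range (n + 1), Tst n (m + 1) * f (m + 1) := by
    rw [Finset.mul_sum]; congr 1; ext m; ring
  rw [h2]
  have h3 : ∑ m ∈ Finset.range (n + 1), Tst n (m + 1) * f (m + 1) + Tst n 0 * f 0 =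
      ∑ m ∈ Finset.range (n + 2), Tst n m * f m := by
    rw [Finset.sum_range_succ' (fun m => Tst n m * f m)]
  have h4 : ∑ m ∈ Finset.range (n + 2), Tst n m * f m =
      ∑ m ∈ Finset.range (n + 1), Tst n m * f m := by
    rw [Finset.sum_range_succ, Tst_zero n (n + 1) (by omega)]
    ring
  have h5 : (n : ℝ) * (∑ m ∈ Finset.range (n + 1), Tst n (m + 1) * f (m + 1)) +
      (n : ℝ) * Tst n 0 * f 0 = n * ∑ m ∈ Finset.range (n + 1), Tst n m * f m := by
    rw [← h4, ← h3]; ring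
  linarith [h5]

lemma prod_eq_Tst : ∀ (n : ℕ) (x : ℝ),
    ∏ i ∈ Finset.range n, (x + i) = ∑ m ∈ Finset.range (n + 1), Tst n m * x ^ m := by
  intro n
  induction n with
  | zero => intro x; simp [Tst]
  | succ n ih =>
    intro x
    rw [Finset.prod_range_succ, ih, sum_succ_Tst n (fun m => x ^ m)]
    rw [Finset.sum_mul, Finset.mul_sum, ← Finset.sum_add_distrib]
    exact Finset.sum_congr rfl fun m _ => by ring

lemma coeff_unique (N : ℕ) (a b : ℕ → ℝ)
    (h : ∀ x : ℝ, ∑ m ∈ Finset.range N, a m * x ^ m = ∑ m ∈ Finset.range N, b m * x ^ m) :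
    ∀ m < N, a m = b m := by
  have hp : (∑ m ∈ Finset.range N, Polynomial.C (a m) * Polynomial.X ^ m) =
      (∑ m ∈ Finset.range N, Polynomial.C (b m) * Polynomial.X ^ m) := by
    apply Polynomial.funext
    intro x
    simpa [Polynomial.eval_finset_sum] using h x
  intro m hm
  have h2 := congrArg (fun p => Polynomial.coeff p m) hp
  simpa [Polynomial.finset_sum_coeff, Polynomial.coeff_C_mul, Polynomial.coeff_X_pow,
    Finset.sum_ite_eq', hm] using h2

noncomputable def muC (k m : ℕ) : ℝ := 1 / ((m : ℝ) + 1) ^ k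

lemma muC_nonneg (k m : ℕ) : 0 ≤ muC k m := by
  unfold muC; positivity

lemma muC_sq_le (k m : ℕ) : muC k (m + 1) ^ 2 ≤ muC k m * muC k (m + 2) := by
  unfold muC
  push_cast
  have key : (((m : ℝ) + 1) * ((m : ℝ) + 3)) ^ k ≤ (((m : ℝ) + 2) * ((m : ℝ) + 2)) ^ k := by
    apply pow_le_pow_left₀ (by positivity)
    nlinarith [sq_nonneg ((m : ℝ))]
  have e1 : (1 / ((m : ℝ) + 1 + 1) ^ k) ^ 2 = 1 / ((((m : ℝ) + 2) * ((m : ℝ) + 2)) ^ k) := by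
    rw [mul_pow]; ring_nf
  have e2 : (1 / ((m : ℝ) + 1) ^ k) * (1 / ((m : ℝ) + 2 + 1) ^ k) =
      1 / ((((m : ℝ) + 1) * ((m : ℝ) + 3)) ^ k) := by
    rw [mul_pow]; ring_nf
  rw [e1, e2]
  exact one_div_le_one_div_of_le (by positivity) key

lemma cs_step (k p : ℕ) :
    (∑ m ∈ Finset.range (p + 1), Tst p m * muC k (m + 1)) ^ 2 ≤
      (∑ m ∈ Finset.range (p + 1), Tst p m * muC k m) *
        ∑ m ∈ Finset.range (p + 1), Tst p m * muC k (m + 2) := by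
  have hB : 0 ≤ ∑ m ∈ Finset.range (p + 1), Tst p m * muC k (m + 1) :=
    Finset.sum_nonneg fun m _ => mul_nonneg (Tst_nonneg p m) (muC_nonneg k (m + 1))
  have hle : ∑ m ∈ Finset.range (p + 1), Tst p m * muC k (m + 1) ≤
      ∑ m ∈ Finset.range (p + 1),
        Real.sqrt (Tst p m * muC k m) * Real.sqrt (Tst p m * muC k (m + 2)) := by
    refine Finset.sum_le_sum fun m _ => ?_
    rw [← Real.sqrt_mul (mul_nonneg (Tst_nonneg p m) (muC_nonneg k m)),
      ← Real.sqrt_sq (mul_nonneg (Tst_nonneg p m) (muC_nonneg k (m + 1)))]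
    apply Real.sqrt_le_sqrt
    have h2 := mul_le_mul_of_nonneg_left (muC_sq_le k m) (sq_nonneg (Tst p m))
    nlinarith [h2]
  calc (∑ m ∈ Finset.range (p + 1), Tst p m * muC k (m + 1)) ^ 2
      ≤ (∑ m ∈ Finset.range (p + 1),
          Real.sqrt (Tst p m * muC k m) * Real.sqrt (Tst p m * muC k (m + 2))) ^ 2 :=
        pow_le_pow_left₀ hB hle 2
    _ ≤ (∑ m ∈ Finset.range (p + 1), Real.sqrt (Tst p m * muC k m) ^ 2) *
          ∑ m ∈ Finset.range (p + 1), Real.sqrt (Tst p m * muC k (m + 2)) ^ 2 :=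
        Finset.sum_mul_sq_le_sq_mul_sq _ _ _
    _ = (∑ m ∈ Finset.range (p + 1), Tst p m * muC k m) *
          ∑ m ∈ Finset.range (p + 1), Tst p m * muC k (m + 2) := by
        congr 1 <;> refine Finset.sum_congr rfl fun m _ => ?_
        · exact Real.sq_sqrt (mul_nonneg (Tst_nonneg p m) (muC_nonneg k m))
        · exact Real.sq_sqrt (mul_nonneg (Tst_nonneg p m) (muC_nonneg k (m + 2)))

lemma sum_succ_Tst' (n N M : ℕ) (hN : N = n + 1) (hM : M = n + 2) (f : ℕ → ℝ) :
    ∑ m ∈ Finset.range M, Tst N m * f m =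
      ∑ m ∈ Finset.range (n + 1), Tst n m * f (m + 1) +
        n * ∑ m ∈ Finset.range (n + 1), Tst n m * f m := by
  subst hN hM; exact sum_succ_Tst n f

lemma main_Tst (k p : ℕ) :
    (∑ m ∈ Finset.range (p + 1 + 1), Tst (p + 1) m * muC k m) ^ 2 ≤
      (∑ m ∈ Finset.range (p + 1), Tst p m * muC k m) *
        ∑ m ∈ Finset.range (p + 1 + 2), Tst (p + 1 + 1) m * muC k m := by
  have e1 : ∑ m ∈ Finset.range (p + 1 + 1), Tst (p + 1) m * muC k m =
      ∑ m ∈ Finset.range (p + 1), Tst p m * muC k (m + 1) +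
        p * ∑ m ∈ Finset.range (p + 1), Tst p m * muC k m :=
    sum_succ_Tst' p (p + 1) (p + 1 + 1) rfl rfl (muC k)
  have e3 : ∑ m ∈ Finset.range (p + 1 + 1), Tst (p + 1) m * muC k (m + 1) =
      ∑ m ∈ Finset.range (p + 1), Tst p m * muC k (m + 2) +
        p * ∑ m ∈ Finset.range (p + 1), Tst p m * muC k (m + 1) :=
    sum_succ_Tst' p (p + 1) (p + 1 + 1) rfl rfl (fun m => muC k (m + 1))
  have e2 : ∑ m ∈ Finset.range (p + 1 + 2), Tst (p + 1 + 1) m * muC k m =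
      ∑ m ∈ Finset.range (p + 1 + 1), Tst (p + 1) m * muC k (m + 1) +
        ((p : ℝ) + 1) * ∑ m ∈ Finset.range (p + 1 + 1), Tst (p + 1) m * muC k m := by
    have := sum_succ_Tst' (p + 1) (p + 1 + 1) (p + 1 + 2) rfl rfl (muC k)
    rw [this]; push_cast; ring
  have hA : 0 ≤ ∑ m ∈ Finset.range (p + 1), Tst p m * muC k m :=
    Finset.sum_nonneg fun m _ => mul_nonneg (Tst_nonneg p m) (muC_nonneg k m)
  have hB : 0 ≤ ∑ m ∈ Finset.range (p + 1), Tst p m * muC k (m + 1) :=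
    Finset.sum_nonneg fun m _ => mul_nonneg (Tst_nonneg p m) (muC_nonneg k (m + 1))
  have hcs := cs_step k p
  rw [e2, e3, e1]
  nlinarith [hcs, mul_nonneg hA hB,
    mul_nonneg (Nat.cast_nonneg p : (0:ℝ) ≤ (p : ℝ)) (mul_nonneg hA hA)]

/-- For `k ≥ 1`, the sequence `ω n = Σ_{m=0}^n [n m] / (m+1)^k` is log-convex,
where `[n m] = S n m` are the unsigned Stirling numbers of the first kind,
characterized by `x(x+1)⋯(x+n−1) = Σ_{m=0}^n S n m * x^m`. -/
theorem stmt_2 (k : ℕ) (hk : 0 < k) (S : ℕ → ℕ → ℝ)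
    (hS : ∀ (n : ℕ) (x : ℝ),
      ∏ i ∈ Finset.range n, (x + i) = ∑ m ∈ Finset.range (n + 1), S n m * x ^ m) :
    ∀ n : ℕ, 1 ≤ n →
      (∑ m ∈ Finset.range (n + 1), S n m / ((m : ℝ) + 1) ^ k) ^ 2 ≤
        (∑ m ∈ Finset.range (n - 1 + 1), S (n - 1) m / ((m : ℝ) + 1) ^ k) *
          (∑ m ∈ Finset.range (n + 2), S (n + 1) m / ((m : ℝ) + 1) ^ k) := by
  have hST : ∀ N m : ℕ, m < N + 1 → S N m = Tst N m := fun N =>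
    coeff_unique (N + 1) (S N) (Tst N) (fun x => by rw [← hS N x, prod_eq_Tst N x])
  have hsum : ∀ N M : ℕ, M = N + 1 →
      ∑ m ∈ Finset.range M, S N m / ((m : ℝ) + 1) ^ k =
        ∑ m ∈ Finset.range M, Tst N m * muC k m := by
    intro N M hM
    refine Finset.sum_congr rfl fun m hm => ?_
    rw [hST N m (by have := Finset.mem_range.mp hm; omega)]
    unfold muC; ring
  intro n hn
  obtain ⟨p, rfl⟩ : ∃ p, n = p + 1 := ⟨n - 1, by omega⟩
  simp only [Nat.add_sub_cancel]
  rw [hsum (p + 1) (p + 1 + 1) rfl, hsum p (p + 1) rfl,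
    hsum (p + 1 + 1) (p + 1 + 2) rfl]
  exact main_Tst k p
end

section
/- For k = 1 and all n ≥ 1, the Cauchy numbers of the first kind c_n = ∫_0^1 x(x−1)⋯(x−n+1) dx satisfy: the sequence {|c_n|}_{n≥2} is log-convex, i.e., c_n^2 ≤ c_{n−1} c_{n+1} in absolute value, equivalently (∫_0^1 (x)_n dx)^2 ≤ (∫_0^1 (x)_{n−1} dx)(∫_0^1 (x)_{n+1} dx) for n ≥ 3 after taking absolute values. -/
open MeasureTheory Finset

noncomputable def Faux (n : ℕ) : ℝ → ℝ := fun x => ∏ i ∈ Finset.range n, (x - i)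

lemma Faux_cont (n : ℕ) : Continuous (Faux n) := by
  unfold Faux
  exact continuous_finset_prod _ fun i _ => continuous_id.sub continuous_const

lemma Faux_bound (n : ℕ) {x : ℝ} (hx : x ∈ Set.Icc (0:ℝ) 1) :
    |Faux n x| ≤ ((n:ℝ)+1) ^ n := by
  unfold Faux
  rw [Finset.abs_prod]
  calc ∏ i ∈ range n, |x - (i:ℝ)| ≤ ∏ i ∈ range n, ((n:ℝ)+1) := by
        refine Finset.prod_le_prod (fun i _ => abs_nonneg _) fun i hi => ?_
        have hi' : (i:ℝ) ≤ n := by exact_mod_cast Nat.le_of_lt (Finset.mem_range.mp hi)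
        rw [abs_sub_le_iff]
        constructor <;> nlinarith [hx.1, hx.2]
    _ = ((n:ℝ)+1) ^ n := by rw [Finset.prod_const, Finset.card_range]

lemma Faux_sign (k : ℕ) {x : ℝ} (hx : x ∈ Set.Icc (0:ℝ) 1) :
    0 ≤ (-1:ℝ) ^ k * Faux (k+1) x := by
  induction k with
  | zero => simpa [Faux] using hx.1
  | succ k ih =>
      have h : Faux (k+2) x = Faux (k+1) x * (x - (k+1)) := by
        unfold Faux; rw [Finset.prod_range_succ]; push_cast; ring_nf
      have h2 : (-1:ℝ)^(k+1) * Faux (k+2) x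
          = ((-1:ℝ)^k * Faux (k+1) x) * (((k:ℝ)+1) - x) := by
        rw [h]; ring
      rw [h2]
      have hx2 : (0:ℝ) ≤ ((k:ℝ)+1) - x := by
        have h1 : x ≤ 1 := hx.2
        have h2 : (0:ℝ) ≤ (k:ℝ) := Nat.cast_nonneg k
        linarith
      exact mul_nonneg ih hx2

lemma Faux_absint (k : ℕ) :
    ∫ x in Set.Ioc (0:ℝ) 1, |Faux (k+1) x| = |∫ x in Set.Ioc (0:ℝ) 1, Faux (k+1) x| := by
  have hmeas : MeasurableSet (Set.Ioc (0:ℝ) 1) := measurableSet_Ioc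
  have hcongr : ∫ x in Set.Ioc (0:ℝ) 1, |Faux (k+1) x|
      = ∫ x in Set.Ioc (0:ℝ) 1, (-1:ℝ)^k * Faux (k+1) x := by
    refine setIntegral_congr_fun hmeas fun x hx => ?_
    have h0 := Faux_sign k (Set.Ioc_subset_Icc_self hx)
    rw [← abs_of_nonneg h0, abs_mul, abs_pow, abs_neg, abs_one, one_pow, one_mul]
  have key : ∫ x in Set.Ioc (0:ℝ) 1, |Faux (k+1) x|
      = (-1:ℝ)^k * ∫ x in Set.Ioc (0:ℝ) 1, Faux (k+1) x := by
    rw [hcongr, integral_const_mul]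
  have hnn : 0 ≤ (-1:ℝ)^k * ∫ x in Set.Ioc (0:ℝ) 1, Faux (k+1) x := by
    rw [← key]; exact integral_nonneg fun x => abs_nonneg _
  rw [key]
  calc (-1:ℝ)^k * ∫ x in Set.Ioc (0:ℝ) 1, Faux (k+1) x
      = |(-1:ℝ)^k * ∫ x in Set.Ioc (0:ℝ) 1, Faux (k+1) x| := (abs_of_nonneg hnn).symm
    _ = |∫ x in Set.Ioc (0:ℝ) 1, Faux (k+1) x| := by
        rw [abs_mul, abs_pow, abs_neg, abs_one, one_pow, one_mul]

lemma Faux_pointwise (m : ℕ) (hm : 1 ≤ m) {x : ℝ} (hx : x ∈ Set.Icc (0:ℝ) 1) :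
    |Faux (m+1) x| ≤ Real.sqrt |Faux m x| * Real.sqrt |Faux (m+2) x| := by
  have e1 : Faux (m+1) x = Faux m x * (x - m) := by
    unfold Faux; rw [Finset.prod_range_succ]
  have e2 : Faux (m+2) x = Faux m x * (x - m) * (x - ((m:ℝ)+1)) := by
    unfold Faux; rw [Finset.prod_range_succ, Finset.prod_range_succ]; push_cast; ring
  have hxm : x ≤ (m:ℝ) := le_trans hx.2 (by exact_mod_cast hm)
  have h3 : Faux (m+1) x ^ 2 ≤ Faux m x * Faux (m+2) x := by
    rw [e1, e2]
    nlinarith [mul_nonneg (sq_nonneg (Faux m x)) (sub_nonneg.mpr hxm)]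
  have h5 : Faux (m+1) x ^ 2 ≤ |Faux m x| * |Faux (m+2) x| :=
    le_trans h3 (by rw [← abs_mul]; exact le_abs_self _)
  calc |Faux (m+1) x| = Real.sqrt (Faux (m+1) x ^ 2) := (Real.sqrt_sq_eq_abs _).symm
    _ ≤ Real.sqrt (|Faux m x| * |Faux (m+2) x|) := Real.sqrt_le_sqrt h5
    _ = Real.sqrt |Faux m x| * Real.sqrt |Faux (m+2) x| := Real.sqrt_mul (abs_nonneg _) _

/-- Cauchy numbers of the first kind `c n = ∫_0^1 x(x−1)⋯(x−n+1) dx`: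
the sequence of absolute values is log-convex for `n ≥ 3`. -/
theorem stmt_3
    (c : ℕ → ℝ)
    (hc : ∀ n, c n = ∫ x in (0:ℝ)..1, ∏ i ∈ Finset.range n, (x - i)) :
    ∀ n : ℕ, 3 ≤ n → |c n| ^ 2 ≤ |c (n - 1)| * |c (n + 1)| := by
  intro n hn
  obtain ⟨m, rfl⟩ : ∃ m, n = m + 1 := ⟨n - 1, by omega⟩
  have hm : 1 ≤ m := by omega
  have hsub : m + 1 - 1 = m := rfl
  rw [hsub]
  -- rewrite c as set integrals over Ioc 0 1
  have hcset : ∀ k, c k = ∫ x in Set.Ioc (0:ℝ) 1, Faux k x := by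
    intro k
    rw [hc k, intervalIntegral.integral_of_le zero_le_one]
    rfl
  set μ : Measure ℝ := volume.restrict (Set.Ioc (0:ℝ) 1) with hμ
  haveI : IsFiniteMeasure μ := by
    constructor
    rw [hμ, Measure.restrict_apply_univ, Real.volume_Ioc]
    exact ENNReal.ofReal_lt_top
  have hmeas : MeasurableSet (Set.Ioc (0:ℝ) 1) := measurableSet_Ioc
  set g : ℝ → ℝ := fun x => Real.sqrt |Faux m x| with hg
  set h : ℝ → ℝ := fun x => Real.sqrt |Faux (m+2) x| with hh
  have hgc : Continuous g := (Faux_cont m).abs.sqrt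
  have hhc : Continuous h := (Faux_cont (m+2)).abs.sqrt
  have memlp : ∀ (k : ℕ) (f : ℝ → ℝ), f = (fun x => Real.sqrt |Faux k x|) →
      MemLp f (ENNReal.ofReal 2) μ := by
    intro k f hf
    have hfc : Continuous f := by rw [hf]; exact (Faux_cont k).abs.sqrt
    refine MemLp.mono_exponent (q := ⊤) ?_ le_top
    refine memLp_top_of_bound hfc.aestronglyMeasurable (Real.sqrt (((k:ℝ)+1)^k)) ?_
    rw [hμ]
    refine (ae_restrict_iff' hmeas).mpr (Filter.Eventually.of_forall fun x hx => ?_)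
    rw [hf, Real.norm_eq_abs, abs_of_nonneg (Real.sqrt_nonneg _)]
    exact Real.sqrt_le_sqrt (Faux_bound k (Set.Ioc_subset_Icc_self hx))
  have hpq : Real.HolderConjugate 2 2 := (Real.holderConjugate_iff_eq_conjExponent one_lt_two).mpr (by norm_num)
  have holder := integral_mul_le_Lp_mul_Lq_of_nonneg (μ := μ) hpq
    (Filter.Eventually.of_forall fun x => Real.sqrt_nonneg _)
    (Filter.Eventually.of_forall fun x => Real.sqrt_nonneg _)
    (memlp m g hg) (memlp (m+2) h hh)
  -- simplify squares: g x ^ (2:ℝ) = |Faux m x|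
  have hsq : ∀ (k : ℕ) (x : ℝ), (Real.sqrt |Faux k x|) ^ (2:ℝ) = |Faux k x| := by
    intro k x
    rw [show (2:ℝ) = ((2:ℕ):ℝ) by norm_cast, Real.rpow_natCast, Real.sq_sqrt (abs_nonneg _)]
  simp only [hg, hh, hsq] at holder
  -- lhs: ∫ |Faux (m+1)| ≤ ∫ g h
  have hint1 : IntegrableOn (fun x => |Faux (m+1) x|) (Set.Ioc (0:ℝ) 1) :=
    ((Faux_cont (m+1)).abs.integrableOn_Ioc)
  have hint2 : IntegrableOn (fun x => g x * h x) (Set.Ioc (0:ℝ) 1) :=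
    ((hgc.mul hhc).integrableOn_Ioc)
  have hmono : ∫ x in Set.Ioc (0:ℝ) 1, |Faux (m+1) x|
      ≤ ∫ x in Set.Ioc (0:ℝ) 1, g x * h x := by
    refine setIntegral_mono_on hint1 hint2 hmeas fun x hx => ?_
    exact Faux_pointwise m hm (Set.Ioc_subset_Icc_self hx)
  -- assemble
  have hA : ∫ x in Set.Ioc (0:ℝ) 1, |Faux m x| = |c m| := by
    obtain ⟨j, rfl⟩ : ∃ j, m = j + 1 := ⟨m - 1, by omega⟩
    rw [Faux_absint, hcset]
  have hB : ∫ x in Set.Ioc (0:ℝ) 1, |Faux (m+2) x| = |c (m+2)| := by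
    rw [show m + 2 = (m+1) + 1 by ring, Faux_absint, hcset]
  have hC : ∫ x in Set.Ioc (0:ℝ) 1, |Faux (m+1) x| = |c (m+1)| := by
    rw [Faux_absint, hcset]
  have hAnn : (0:ℝ) ≤ |c m| := abs_nonneg _
  have hBnn : (0:ℝ) ≤ |c (m+2)| := abs_nonneg _
  have hfinal : |c (m+1)| ≤ |c m| ^ ((1:ℝ)/2) * |c (m+2)| ^ ((1:ℝ)/2) := by
    rw [← hA, ← hB, ← hC]
    exact le_trans hmono holder
  have hrw : |c m| ^ ((1:ℝ)/2) = Real.sqrt (|c m|) := (Real.sqrt_eq_rpow _).symm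
  have hrw2 : |c (m+2)| ^ ((1:ℝ)/2) = Real.sqrt (|c (m+2)|) := (Real.sqrt_eq_rpow _).symm
  rw [hrw, hrw2] at hfinal
  calc |c (m+1)| ^ 2 ≤ (Real.sqrt (|c m|) * Real.sqrt (|c (m+2)|)) ^ 2 := by
        exact pow_le_pow_left₀ (abs_nonneg _) hfinal 2
    _ = |c m| * |c (m+2)| := by
        rw [mul_pow, Real.sq_sqrt hAnn, Real.sq_sqrt hBnn]
  -- note m + 1 + 1 = m + 2
end

section
/- Let k ≥ 1 and for n ≥ 1 define I_n = ∫_{[0,1]^k} (x_1⋯x_k)(1 − x_1⋯x_k)(2 − x_1⋯x_k)⋯(n−1 − x_1⋯x_k) dx_1⋯dx_k. Then for all n ≥ 3, I_n^2 ≤ I_{n−1} I_{n+1}. Consequently the sequence {|c_n^{(k)}|}_{n≥2} of absolute values of poly-Cauchy numbers of the first kind is log-convex. -/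
open MeasureTheory

/-- Integral of `f (x₁ ⋯ x_k)` over the unit cube `[0,1]^k`. -/
noncomputable def cubeInt (k : ℕ) (f : ℝ → ℝ) : ℝ :=
  ∫ x : Fin k → ℝ in Set.univ.pi fun _ => Set.Icc (0:ℝ) 1, f (∏ i, x i)

section Aux

variable {k : ℕ}

/-- the integrand -/
noncomputable def gFun (n : ℕ) (p : ℝ) : ℝ :=
  p * ∏ i ∈ Finset.range (n - 1), ((i : ℝ) + 1 - p)

lemma gFun_cont (n : ℕ) : Continuous (gFun n) := by
  unfold gFun; continuity

lemma prod_mem_Icc {x : Fin k → ℝ}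
    (hx : x ∈ Set.univ.pi fun _ => Set.Icc (0:ℝ) 1) : (∏ i, x i) ∈ Set.Icc (0:ℝ) 1 := by
  constructor
  · exact Finset.prod_nonneg fun i _ => (hx i (Set.mem_univ i)).1
  · exact Finset.prod_le_one (fun i _ => (hx i (Set.mem_univ i)).1)
      (fun i _ => (hx i (Set.mem_univ i)).2)

lemma gFun_nonneg {n : ℕ} {p : ℝ} (hp : p ∈ Set.Icc (0:ℝ) 1) : 0 ≤ gFun n p := by
  refine mul_nonneg hp.1 (Finset.prod_nonneg fun i _ => ?_)
  have hi : (0:ℝ) ≤ (i:ℝ) := Nat.cast_nonneg i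
  linarith [hp.2]

lemma gFun_sq_le {n : ℕ} (hn : 3 ≤ n) {p : ℝ} (hp : p ∈ Set.Icc (0:ℝ) 1) :
    gFun n p ^ 2 ≤ gFun (n - 1) p * gFun (n + 1) p := by
  obtain ⟨m, rfl⟩ : ∃ m, n = m + 3 := ⟨n - 3, by omega⟩
  unfold gFun
  rw [show m + 3 - 1 = (m + 1) + 1 from rfl, show m + 1 + 1 - 1 = m + 1 from rfl,
    show m + 3 + 1 - 1 = ((m + 1) + 1) + 1 from rfl]
  have e1 : ∏ i ∈ Finset.range (m + 1 + 1), ((i:ℝ) + 1 - p)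
      = (∏ i ∈ Finset.range (m + 1), ((i:ℝ) + 1 - p)) * ((m:ℝ) + 2 - p) := by
    rw [Finset.prod_range_succ]; push_cast; ring
  have e2 : ∏ i ∈ Finset.range (m + 1 + 1 + 1), ((i:ℝ) + 1 - p)
      = (∏ i ∈ Finset.range (m + 1), ((i:ℝ) + 1 - p)) * ((m:ℝ) + 2 - p) * ((m:ℝ) + 3 - p) := by
    rw [Finset.prod_range_succ, Finset.prod_range_succ]; push_cast; ring
  rw [e1, e2]
  have hP : 0 ≤ ∏ i ∈ Finset.range (m + 1), ((i : ℝ) + 1 - p) := by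
    refine Finset.prod_nonneg fun i _ => ?_
    have hi : (0:ℝ) ≤ (i:ℝ) := Nat.cast_nonneg i
    linarith [hp.2]
  have hp0 := hp.1
  have hp1 := hp.2
  set P := ∏ i ∈ Finset.range (m + 1), ((i : ℝ) + 1 - p) with hPdef
  have ha : 0 ≤ (m:ℝ) + 2 - p := by
    have hm : (0:ℝ) ≤ (m:ℝ) := Nat.cast_nonneg m
    linarith
  nlinarith [sq_nonneg (p * P), mul_nonneg hp0 hP, sq_nonneg (p * P * ((m:ℝ) + 2 - p)),
    mul_nonneg (mul_nonneg (mul_nonneg hp0 hP) ha) ha]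

lemma falling_eq (n : ℕ) (hn : 1 ≤ n) (p : ℝ) :
    ∏ i ∈ Finset.range n, (p - (i : ℝ)) = (-1 : ℝ) ^ (n - 1) * gFun n p := by
  obtain ⟨m, rfl⟩ : ∃ m, n = m + 1 := ⟨n - 1, by omega⟩
  rw [Finset.prod_range_succ' (fun i => p - (i : ℝ))]
  have : ∀ i ∈ Finset.range m, p - ((i : ℕ) + 1 : ℕ) = (-1) * ((i : ℝ) + 1 - p) := by
    intro i _; push_cast; ring
  rw [Finset.prod_congr rfl this, Finset.prod_mul_distrib, Finset.prod_const,
    Finset.card_range]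
  unfold gFun
  simp only [Nat.add_sub_cancel, Nat.cast_zero, sub_zero]
  ring

end Aux

/-- For `I n = ∫_{[0,1]^k} p(1−p)⋯(n−1−p)` (with `p = x₁⋯x_k`), one has
`I n ^ 2 ≤ I (n−1) * I (n+1)` for `n ≥ 3`; consequently the absolute values of
the poly-Cauchy numbers of the first kind `c n = ∫_{[0,1]^k} (p)_n` form a
log-convex sequence. -/
theorem stmt_4 (k : ℕ) (hk : 0 < k)
    (I : ℕ → ℝ)
    (hI : ∀ n, I n = cubeInt k fun p => p * ∏ i ∈ Finset.range (n - 1), ((i : ℝ) + 1 - p))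
    (c : ℕ → ℝ)
    (hc : ∀ n, c n = cubeInt k fun p => ∏ i ∈ Finset.range n, (p - i)) :
    (∀ n : ℕ, 3 ≤ n → I n ^ 2 ≤ I (n - 1) * I (n + 1)) ∧
      (∀ n : ℕ, 3 ≤ n → |c n| ^ 2 ≤ |c (n - 1)| * |c (n + 1)|) := by
  set S : Set (Fin k → ℝ) := Set.univ.pi fun _ => Set.Icc (0:ℝ) 1 with hSdef
  have hSmeas : MeasurableSet S := MeasurableSet.univ_pi fun _ => measurableSet_Icc
  have hScomp : IsCompact S := isCompact_univ_pi fun _ => isCompact_Icc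
  set μ : Measure (Fin k → ℝ) := volume.restrict S with hμdef
  haveI : Fact ((volume : Measure (Fin k → ℝ)) S < ⊤) := ⟨hScomp.measure_lt_top⟩
  have hIg : ∀ n, I n = ∫ x, gFun n (∏ i, x i) ∂μ := fun n => by
    rw [hI n]; rfl
  have hcont : ∀ n, Continuous fun x : Fin k → ℝ => gFun n (∏ i, x i) := fun n =>
    (gFun_cont n).comp (continuous_finset_prod _ fun i _ => continuous_apply i)
  have hint : ∀ n, Integrable (fun x : Fin k → ℝ => gFun n (∏ i, x i)) μ := fun n =>
    (hcont n).continuousOn.integrableOn_compact hScomp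
  have hnonneg : ∀ n, 0 ≤ I n := by
    intro n
    rw [hIg n]
    refine setIntegral_nonneg hSmeas fun x hx => gFun_nonneg (prod_mem_Icc hx)
  -- Part 1
  have part1 : ∀ n : ℕ, 3 ≤ n → I n ^ 2 ≤ I (n - 1) * I (n + 1) := by
    intro n hn
    set F : (Fin k → ℝ) → ℝ := fun x => Real.sqrt (gFun (n - 1) (∏ i, x i)) with hF
    set G : (Fin k → ℝ) → ℝ := fun x => Real.sqrt (gFun (n + 1) (∏ i, x i)) with hG
    have hFcont : Continuous F := ((hcont (n - 1)).sqrt)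
    have hGcont : Continuous G := ((hcont (n + 1)).sqrt)
    have haeS : ∀ᵐ x ∂μ, x ∈ S := ae_restrict_mem hSmeas
    -- pointwise: g n ≤ F * G on S
    have hptwise : ∀ x ∈ S, gFun n (∏ i, x i) ≤ F x * G x := by
      intro x hx
      have hp := prod_mem_Icc hx
      have h1 : gFun n (∏ i, x i) ^ 2 ≤ gFun (n - 1) (∏ i, x i) * gFun (n + 1) (∏ i, x i) :=
        gFun_sq_le hn hp
      have h2 : 0 ≤ gFun n (∏ i, x i) := gFun_nonneg hp
      have h3 : 0 ≤ gFun (n - 1) (∏ i, x i) := gFun_nonneg hp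
      have h4 : 0 ≤ gFun (n + 1) (∏ i, x i) := gFun_nonneg hp
      calc gFun n (∏ i, x i) = Real.sqrt (gFun n (∏ i, x i) ^ 2) := by
            rw [Real.sqrt_sq h2]
        _ ≤ Real.sqrt (gFun (n - 1) (∏ i, x i) * gFun (n + 1) (∏ i, x i)) :=
            Real.sqrt_le_sqrt h1
        _ = F x * G x := by rw [Real.sqrt_mul h3]
    -- memℒp for F and G with exponent 2
    have hmem : ∀ (H : (Fin k → ℝ) → ℝ), Continuous H → MemLp H (ENNReal.ofReal 2) μ := by
      intro H hH
      obtain ⟨C, hC⟩ := hScomp.exists_bound_of_continuousOn hH.continuousOn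
      exact MemLp.of_bound hH.aestronglyMeasurable C
        (haeS.mono fun x hx => hC x hx)
    have hFG : Integrable (fun x => F x * G x) μ :=
      (hFcont.mul hGcont).continuousOn.integrableOn_compact hScomp
    have step1 : I n ≤ ∫ x, F x * G x ∂μ := by
      rw [hIg n]
      exact integral_mono_ae (hint n) hFG (haeS.mono hptwise)
    have hconj : (2:ℝ).HolderConjugate 2 := by
      constructor <;> norm_num
    have step2 : ∫ x, F x * G x ∂μ ≤
        (∫ x, F x ^ (2:ℝ) ∂μ) ^ (1/(2:ℝ)) * (∫ x, G x ^ (2:ℝ) ∂μ) ^ (1/(2:ℝ)) :=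
      integral_mul_le_Lp_mul_Lq_of_nonneg hconj
        (Filter.Eventually.of_forall fun x => Real.sqrt_nonneg _)
        (Filter.Eventually.of_forall fun x => Real.sqrt_nonneg _)
        (hmem F hFcont) (hmem G hGcont)
    have hF2 : ∫ x, F x ^ (2:ℝ) ∂μ = I (n - 1) := by
      rw [hIg (n - 1)]
      refine integral_congr_ae (haeS.mono fun x hx => ?_)
      have := gFun_nonneg (n := n - 1) (prod_mem_Icc hx)
      simp only [hF]
      rw [show (2:ℝ) = ((2:ℕ):ℝ) by norm_num, Real.rpow_natCast, Real.sq_sqrt this]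
    have hG2 : ∫ x, G x ^ (2:ℝ) ∂μ = I (n + 1) := by
      rw [hIg (n + 1)]
      refine integral_congr_ae (haeS.mono fun x hx => ?_)
      have := gFun_nonneg (n := n + 1) (prod_mem_Icc hx)
      simp only [hG]
      rw [show (2:ℝ) = ((2:ℕ):ℝ) by norm_num, Real.rpow_natCast, Real.sq_sqrt this]
    rw [hF2, hG2] at step2
    have hIn := hnonneg n
    have h1 := hnonneg (n - 1)
    have h2 := hnonneg (n + 1)
    have key : I n ≤ I (n - 1) ^ (1/(2:ℝ)) * I (n + 1) ^ (1/(2:ℝ)) := le_trans step1 step2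
    have hsq : (I (n - 1) ^ (1/(2:ℝ)) * I (n + 1) ^ (1/(2:ℝ))) ^ 2 = I (n - 1) * I (n + 1) := by
      rw [mul_pow, ← Real.rpow_natCast (I (n-1) ^ (1/(2:ℝ))) 2,
        ← Real.rpow_natCast (I (n+1) ^ (1/(2:ℝ))) 2,
        ← Real.rpow_mul h1, ← Real.rpow_mul h2]
      norm_num
    calc I n ^ 2 ≤ (I (n - 1) ^ (1/(2:ℝ)) * I (n + 1) ^ (1/(2:ℝ))) ^ 2 := by
          exact pow_le_pow_left₀ hIn key 2
      _ = I (n - 1) * I (n + 1) := hsq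
  refine ⟨part1, ?_⟩
  -- Part 2
  have habs : ∀ n : ℕ, 1 ≤ n → |c n| = I n := by
    intro n hn
    have : c n = (-1 : ℝ) ^ (n - 1) * I n := by
      rw [hc n, hI n, cubeInt, cubeInt]
      rw [← integral_const_mul]
      refine integral_congr_ae (Filter.Eventually.of_forall fun x => ?_)
      exact falling_eq n hn _
    rw [this, abs_mul, abs_pow, abs_neg, abs_one, one_pow, one_mul,
      abs_of_nonneg (hnonneg n)]
  intro n hn
  rw [habs n (by omega), habs (n - 1) (by omega), habs (n + 1) (by omega)]
  exact part1 n hn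
end

section
/- Let k ≥ 1 and for n ≥ 0 define J_n = ∫_{[0,1]^k} (x_1⋯x_k)(x_1⋯x_k + 1)⋯(x_1⋯x_k + n − 1) dx_1⋯dx_k (with J_0 = 1). Then for all n ≥ 1, J_n^2 ≤ J_{n−1} J_{n+1}; that is, the sequence {(−1)^n ĉ_n^{(k)}}_{n≥0} of signed poly-Cauchy numbers of the second kind is log-convex. -/
open MeasureTheory

/-- For `J n = ∫_{[0,1]^k} p(p+1)⋯(p+n−1)` (with `p = x₁⋯x_k`, `J 0 = 1`),
the sequence `J` (which equals `(−1)^n ĉ_n^{(k)}`) is log-convex. -/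
theorem stmt_5 (k : ℕ) (hk : 0 < k)
    (J : ℕ → ℝ)
    (hJ : ∀ n, J n = cubeInt k fun p => ∏ i ∈ Finset.range n, (p + i)) :
    ∀ n : ℕ, 1 ≤ n → J n ^ 2 ≤ J (n - 1) * J (n + 1) := by
  intro n hn
  obtain ⟨m, rfl⟩ : ∃ m, n = m + 1 := ⟨n - 1, (Nat.succ_pred_eq_of_pos hn).symm⟩
  simp only [Nat.add_sub_cancel]
  set S : Set (Fin k → ℝ) := Set.univ.pi fun _ => Set.Icc (0:ℝ) 1 with hS
  have hSm : MeasurableSet S := MeasurableSet.univ_pi fun _ => measurableSet_Icc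
  have hScomp : IsCompact S := isCompact_univ_pi fun _ => isCompact_Icc
  set μ := volume.restrict S with hμ
  haveI : IsFiniteMeasure μ := by
    refine ⟨?_⟩
    rw [hμ, Measure.restrict_apply_univ]
    exact hScomp.measure_lt_top
  set P : (Fin k → ℝ) → ℝ := fun x => ∏ i, x i with hP
  have hPc : Continuous P := continuous_finset_prod _ fun i _ => continuous_apply i
  have hPnn : ∀ x ∈ S, 0 ≤ P x := by
    intro x hx
    exact Finset.prod_nonneg fun i _ => (hx i (Set.mem_univ i)).1
  -- the product functions
  set F : ℕ → (Fin k → ℝ) → ℝ := fun j x => ∏ i ∈ Finset.range j, (P x + i) with hF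
  have hFc : ∀ j, Continuous (F j) := fun j =>
    continuous_finset_prod _ fun i _ => hPc.add continuous_const
  have hFnn : ∀ j, ∀ x ∈ S, 0 ≤ F j x := by
    intro j x hx
    exact Finset.prod_nonneg fun i _ => add_nonneg (hPnn x hx) (Nat.cast_nonneg i)
  have hFint : ∀ (g : (Fin k → ℝ) → ℝ), Continuous g → Integrable g μ := fun g hg =>
    (hg.continuousOn.integrableOn_compact hScomp)
  -- a and b
  set a : (Fin k → ℝ) → ℝ := fun x => Real.sqrt (F m x) with ha
  set b : (Fin k → ℝ) → ℝ := fun x => Real.sqrt (F (m + 2) x) with hb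
  have hac : Continuous a := (hFc m).sqrt
  have hbc : Continuous b := (hFc (m + 2)).sqrt
  -- squares
  have hasq : ∀ x ∈ S, a x ^ 2 = F m x := fun x hx => Real.sq_sqrt (hFnn m x hx)
  have hbsq : ∀ x ∈ S, b x ^ 2 = F (m + 2) x := fun x hx => Real.sq_sqrt (hFnn (m + 2) x hx)
  -- J values as integrals
  have hJm : J m = ∫ x, F m x ∂μ := hJ m
  have hJm1 : J (m + 1) = ∫ x, F (m + 1) x ∂μ := hJ (m + 1)
  have hJm2 : J (m + 2) = ∫ x, F (m + 2) x ∂μ := hJ (m + 2)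
  -- pointwise: F (m+1) ≤ a * b on S
  have hpt : ∀ x ∈ S, F (m + 1) x ≤ a x * b x := by
    intro x hx
    have hp := hPnn x hx
    have hA := hFnn m x hx
    have hab : a x * b x = Real.sqrt (F m x * F (m + 2) x) :=
      (Real.sqrt_mul hA _).symm
    rw [hab]
    have h1 : F (m + 1) x = F m x * (P x + m) := by
      simp [hF, Finset.prod_range_succ]
    have h2 : F (m + 2) x = F m x * (P x + m) * (P x + (m + 1)) := by
      simp [hF, Finset.prod_range_succ, mul_assoc]
    have hg : (0:ℝ) ≤ F (m + 1) x := by rw [h1]; positivity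
    rw [show F (m + 1) x = Real.sqrt (F (m + 1) x ^ 2) from (Real.sqrt_sq hg).symm]
    apply Real.sqrt_le_sqrt
    rw [h1, h2]
    nlinarith [sq_nonneg (F m x), mul_nonneg hA (by positivity : (0:ℝ) ≤ P x + m)]
  -- Hölder / Cauchy–Schwarz
  have hconj : Real.HolderConjugate 2 2 := ⟨by norm_num, by norm_num, by norm_num⟩
  have hma : MemLp a (ENNReal.ofReal 2) μ := by
    rw [show ENNReal.ofReal 2 = 2 by norm_num]
    rw [memLp_two_iff_integrable_sq hac.aestronglyMeasurable]
    exact hFint _ (hac.pow 2)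
  have hmb : MemLp b (ENNReal.ofReal 2) μ := by
    rw [show ENNReal.ofReal 2 = 2 by norm_num]
    rw [memLp_two_iff_integrable_sq hbc.aestronglyMeasurable]
    exact hFint _ (hbc.pow 2)
  have hann : 0 ≤ᵐ[μ] a := Filter.Eventually.of_forall fun x => Real.sqrt_nonneg _
  have hbnn : 0 ≤ᵐ[μ] b := Filter.Eventually.of_forall fun x => Real.sqrt_nonneg _
  have hCS := MeasureTheory.integral_mul_le_Lp_mul_Lq_of_nonneg hconj hann hbnn hma hmb
  -- rewrite rpow 2 as pow 2
  have hr2 : ∀ y : ℝ, 0 ≤ y → y ^ (2:ℝ) = y ^ 2 := fun y hy => by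
    rw [show (2:ℝ) = ((2:ℕ):ℝ) by norm_num, Real.rpow_natCast]
  have hIa : ∫ x, a x ^ (2:ℝ) ∂μ = ∫ x, F m x ∂μ := by
    rw [hμ]
    refine setIntegral_congr_fun hSm fun x hx => ?_
    rw [hr2 _ (Real.sqrt_nonneg _), hasq x hx]
  have hIb : ∫ x, b x ^ (2:ℝ) ∂μ = ∫ x, F (m + 2) x ∂μ := by
    rw [hμ]
    refine setIntegral_congr_fun hSm fun x hx => ?_
    rw [hr2 _ (Real.sqrt_nonneg _), hbsq x hx]
  rw [hIa, hIb, ← hJm, ← hJm2] at hCS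
  -- step 1: J (m+1) ≤ ∫ a * b
  have hstep : J (m + 1) ≤ ∫ x, a x * b x ∂μ := by
    rw [hJm1, hμ]
    refine setIntegral_mono_on ((hFint _ (hFc (m + 1))).mono_measure
      (le_of_eq hμ.symm) |>.mono_measure le_rfl) ?_ hSm hpt
    exact (hFint _ (hac.mul hbc))
  -- nonnegativity of J's
  have hJm1nn : 0 ≤ J (m + 1) := by
    rw [hJm1, hμ]
    exact setIntegral_nonneg hSm (hFnn (m + 1))
  have hJmnn : 0 ≤ J m := by
    rw [hJm, hμ]
    exact setIntegral_nonneg hSm (hFnn m)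
  have hJm2nn : 0 ≤ J (m + 2) := by
    rw [hJm2, hμ]
    exact setIntegral_nonneg hSm (hFnn (m + 2))
  have hkey : J (m + 1) ≤ J m ^ (1/2 : ℝ) * J (m + 2) ^ (1/2 : ℝ) := le_trans hstep hCS
  calc J (m + 1) ^ 2 ≤ (J m ^ (1/2 : ℝ) * J (m + 2) ^ (1/2 : ℝ)) ^ 2 := by
        apply pow_le_pow_left₀ hJm1nn hkey
    _ = J m * J (m + 2) := by
        rw [mul_pow, ← Real.rpow_natCast (J m ^ (1/2:ℝ)) 2, ← Real.rpow_natCast (J (m+2) ^ (1/2:ℝ)) 2,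
          ← Real.rpow_mul hJmnn, ← Real.rpow_mul hJm2nn]
        norm_num
end

section
/- Let k ≥ 1 and let A = (0, α_1, α_2, …) be a sequence of reals with α_j ≥ 1 and α_j − α_{j−1} ≥ 1 for all j ≥ 1. For n ≥ 0 define J_n = ∫_{[0,1]^k} (x_1⋯x_k)(x_1⋯x_k + α_1)⋯(x_1⋯x_k + α_{n−1}) dx_1⋯dx_k (with J_0 = 1). Then for all n ≥ 1, J_n^2 ≤ J_{n−1} J_{n+1}; i.e., the sequence {(−1)^n ĉ_{n,A}^{(k)}}_{n≥0} of signed multiparameter-poly-Cauchy numbers of the second kind is log-convex. -/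
open MeasureTheory

/-- Multiparameter case, second kind: if `α 0 = 0`, `α j ≥ 1` and
`α j − α (j−1) ≥ 1` for `j ≥ 1`, then
`J n = ∫_{[0,1]^k} (p+α₀)(p+α₁)⋯(p+α_{n−1})` (so `J 0 = 1`) satisfies
`J n ^2 ≤ J (n−1) J (n+1)` for `n ≥ 1`. -/
theorem stmt_7 (k : ℕ) (hk : 0 < k) (α : ℕ → ℝ) (hα0 : α 0 = 0)
    (hα1 : ∀ j : ℕ, 1 ≤ j → 1 ≤ α j)
    (hαd : ∀ j : ℕ, 1 ≤ j → 1 ≤ α j - α (j - 1))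
    (J : ℕ → ℝ)
    (hJ : ∀ n, J n = cubeInt k fun p => ∏ i ∈ Finset.range n, (p + α i)) :
    ∀ n : ℕ, 1 ≤ n → J n ^ 2 ≤ J (n - 1) * J (n + 1) := by
  intro n hn
  obtain ⟨m, rfl⟩ : ∃ m, n = m + 1 := ⟨n - 1, by omega⟩
  have hm1 : m + 1 - 1 = m := by omega
  set s : Set (Fin k → ℝ) := Set.univ.pi fun _ => Set.Icc (0:ℝ) 1 with hs
  have hsm : MeasurableSet s := MeasurableSet.univ_pi fun _ => measurableSet_Icc
  have hscomp : IsCompact s := isCompact_univ_pi fun _ => isCompact_Icc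
  have hαnn : ∀ i, 0 ≤ α i := by
    intro i
    rcases Nat.eq_zero_or_pos i with h | h
    · simp [h, hα0]
    · linarith [hα1 i h]
  -- the integrand functions
  set G : ℕ → (Fin k → ℝ) → ℝ :=
    fun m x => ∏ i ∈ Finset.range m, ((∏ j, x j) + α i) with hG
  have hGcont : ∀ m, Continuous (G m) := by
    intro m
    apply continuous_finset_prod
    intro i _
    exact (continuous_finset_prod _ fun j _ => continuous_apply j).add continuous_const
  have hGint : ∀ m, IntegrableOn (G m) s := fun m =>
    (hGcont m).continuousOn.integrableOn_compact hscomp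
  have hGnn : ∀ m, ∀ x ∈ s, 0 ≤ G m x := by
    intro m x hx
    have hp : 0 ≤ ∏ j, x j := Finset.prod_nonneg fun j _ => (hx j trivial).1
    exact Finset.prod_nonneg fun i _ => by have := hαnn i; linarith
  have hJeq : ∀ m, J m = ∫ x in s, G m x := fun m => hJ m
  -- sqrt functions
  set g : (Fin k → ℝ) → ℝ := fun x => Real.sqrt (G m x) with hgdef
  set h : (Fin k → ℝ) → ℝ := fun x => Real.sqrt (G (m + 2) x) with hhdef
  have hgcont : Continuous g := Real.continuous_sqrt.comp (hGcont m)
  have hhcont : Continuous h := Real.continuous_sqrt.comp (hGcont (m + 2))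
  -- pointwise bound
  have key : ∀ x ∈ s, G (m + 1) x ≤ g x * h x := by
    intro x hx
    have hp : 0 ≤ ∏ j, x j := Finset.prod_nonneg fun j _ => (hx j trivial).1
    set p : ℝ := ∏ j, x j with hpdef
    have ha : 0 ≤ G m x := hGnn m x hx
    have hb : 0 ≤ p + α m := by have := hαnn m; linarith
    have hc : p + α m ≤ p + α (m + 1) := by
      have := hαd (m + 1) (by omega)
      simp only [Nat.add_sub_cancel] at this
      linarith
    have h1 : G (m + 1) x = G m x * (p + α m) := by
      simp [hG, Finset.prod_range_succ, hpdef]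
    have h2 : G (m + 2) x = G m x * (p + α m) * (p + α (m + 1)) := by
      simp [hG, Finset.prod_range_succ, hpdef]
    have hineq : (G m x * (p + α m)) ^ 2
        ≤ G m x * (G m x * (p + α m) * (p + α (m + 1))) := by
      nlinarith [mul_nonneg (mul_nonneg (mul_nonneg ha ha) hb) (sub_nonneg.2 hc)]
    show G (m + 1) x ≤ Real.sqrt (G m x) * Real.sqrt (G (m + 2) x)
    rw [← Real.sqrt_mul ha, h1, h2]
    calc G m x * (p + α m)
        = Real.sqrt ((G m x * (p + α m)) ^ 2) :=
          (Real.sqrt_sq (mul_nonneg ha hb)).symm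
      _ ≤ Real.sqrt (G m x * (G m x * (p + α m) * (p + α (m + 1)))) :=
          Real.sqrt_le_sqrt hineq
  -- step 1 : J (m+1) ≤ ∫ g * h
  have hghint : IntegrableOn (fun x => g x * h x) s :=
    ((hgcont.mul hhcont)).continuousOn.integrableOn_compact hscomp
  have step1 : J (m + 1) ≤ ∫ x in s, g x * h x := by
    rw [hJeq]
    exact setIntegral_mono_on (hGint (m + 1)) hghint hsm key
  -- step 2 : Hölder
  have hpq : Real.HolderConjugate 2 2 := by
    rw [Real.holderConjugate_iff]; norm_num
  have hsq : ∀ (f : (Fin k → ℝ) → ℝ), Continuous f →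
      MemLp f (ENNReal.ofReal 2) (volume.restrict s) := by
    intro f hf
    rw [show (ENNReal.ofReal 2) = (2 : ENNReal) by norm_num,
      memLp_two_iff_integrable_sq hf.aestronglyMeasurable]
    exact ((hf.mul hf).continuousOn.integrableOn_compact hscomp).congr_fun
      (fun x _ => (sq (f x)).symm) hsm
  have step2 : ∫ x in s, g x * h x ≤
      (∫ x in s, g x ^ (2:ℝ)) ^ ((1:ℝ)/2) * (∫ x in s, h x ^ (2:ℝ)) ^ ((1:ℝ)/2) := by
    refine integral_mul_le_Lp_mul_Lq_of_nonneg hpq ?_ ?_ (hsq g hgcont) (hsq h hhcont)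
    · exact Filter.Eventually.of_forall fun x => Real.sqrt_nonneg _
    · exact Filter.Eventually.of_forall fun x => Real.sqrt_nonneg _
  -- identify ∫ g² = J m and ∫ h² = J (m+2)
  have hg2 : ∫ x in s, g x ^ (2:ℝ) = J m := by
    rw [hJeq]
    refine setIntegral_congr_fun hsm fun x hx => ?_
    rw [Real.rpow_two, hgdef]
    exact Real.sq_sqrt (hGnn m x hx)
  have hh2 : ∫ x in s, h x ^ (2:ℝ) = J (m + 2) := by
    rw [hJeq]
    refine setIntegral_congr_fun hsm fun x hx => ?_
    rw [Real.rpow_two, hhdef]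
    exact Real.sq_sqrt (hGnn (m + 2) x hx)
  have hJnn : ∀ m, 0 ≤ J m := by
    intro m
    rw [hJeq]
    exact setIntegral_nonneg hsm (hGnn m)
  have hbound : J (m + 1) ≤ Real.sqrt (J m) * Real.sqrt (J (m + 2)) := by
    calc J (m + 1) ≤ ∫ x in s, g x * h x := step1
      _ ≤ (∫ x in s, g x ^ (2:ℝ)) ^ ((1:ℝ)/2) * (∫ x in s, h x ^ (2:ℝ)) ^ ((1:ℝ)/2) := step2
      _ = Real.sqrt (J m) * Real.sqrt (J (m + 2)) := by
          rw [hg2, hh2, ← Real.sqrt_eq_rpow, ← Real.sqrt_eq_rpow]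
  have hfin : J (m + 1) ^ 2 ≤ (Real.sqrt (J m) * Real.sqrt (J (m + 2))) ^ 2 :=
    pow_le_pow_left₀ (hJnn (m + 1)) hbound 2
  calc J (m + 1) ^ 2 ≤ (Real.sqrt (J m) * Real.sqrt (J (m + 2))) ^ 2 := hfin
    _ = J m * J (m + 2) := by
        rw [mul_pow, Real.sq_sqrt (hJnn m), Real.sq_sqrt (hJnn (m + 2))]
    _ = J (m + 1 - 1) * J (m + 1 + 1) := by rw [hm1]
end

section
/- Let k ≥ 1 and let A = (0, α_1, α_2, …) be a sequence of nonnegative reals. Suppose there exists l ≥ 3 such that α_j ≥ 2 for 1 ≤ j ≤ l and α_j = 1 for j ≥ l+1. Then the sequence σ_{n,A}^{(k)} = ∫_{[0,1]^k} (x_1⋯x_k)(α_1 − x_1⋯x_k)⋯(α_{n−1} − x_1⋯x_k) dx_1⋯dx_k (n ≥ 1) is unimodal with its peak at n = l+1: σ_{n,A}^{(k)} ≤ σ_{n+1,A}^{(k)} for 1 ≤ n ≤ l, and σ_{n,A}^{(k)} ≥ σ_{n+1,A}^{(k)} for n ≥ l+1. -/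
open MeasureTheory

lemma cubeInt_mono (k : ℕ) {f g : ℝ → ℝ} (hf : Continuous f) (hg : Continuous g)
    (h : ∀ p ∈ Set.Icc (0:ℝ) 1, f p ≤ g p) : cubeInt k f ≤ cubeInt k g := by
  have hcomp : Continuous fun x : Fin k → ℝ => ∏ i, x i :=
    continuous_finset_prod _ fun i _ => continuous_apply i
  have hK : IsCompact (Set.univ.pi fun _ : Fin k => Set.Icc (0:ℝ) 1) :=
    isCompact_univ_pi fun _ => isCompact_Icc
  apply setIntegral_mono_on
  · exact ((hf.comp hcomp).continuousOn).integrableOn_compact hK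
  · exact ((hg.comp hcomp).continuousOn).integrableOn_compact hK
  · exact MeasurableSet.univ_pi fun _ => measurableSet_Icc
  · intro x hx
    apply h
    have hx' : ∀ i, x i ∈ Set.Icc (0:ℝ) 1 := fun i => hx i (Set.mem_univ i)
    exact ⟨Finset.prod_nonneg fun i _ => (hx' i).1,
      Finset.prod_le_one (fun i _ => (hx' i).1) (fun i _ => (hx' i).2)⟩

/-- If `α j ≥ 2` for `1 ≤ j ≤ l` and `α j = 1` for `j ≥ l + 1` (with `l ≥ 3`,
`α 0 = 0`, all `α j ≥ 0`), then `σ n = ∫_{[0,1]^k} p(α₁−p)⋯(α_{n−1}−p)` is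
unimodal with peak at `l + 1`. -/
theorem stmt_9 (k : ℕ) (hk : 0 < k) (α : ℕ → ℝ) (hα0 : α 0 = 0)
    (hnn : ∀ j, 0 ≤ α j) (l : ℕ) (hl : 3 ≤ l)
    (h2 : ∀ j : ℕ, 1 ≤ j → j ≤ l → 2 ≤ α j)
    (h1 : ∀ j : ℕ, l + 1 ≤ j → α j = 1)
    (σ : ℕ → ℝ)
    (hσ : ∀ n, σ n = cubeInt k fun p => p * ∏ i ∈ Finset.range (n - 1), (α (i + 1) - p)) :
    (∀ n : ℕ, 1 ≤ n → n ≤ l → σ n ≤ σ (n + 1)) ∧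
      (∀ n : ℕ, l + 1 ≤ n → σ (n + 1) ≤ σ n) := by
  have hge1 : ∀ j : ℕ, 1 ≤ j → (1:ℝ) ≤ α j := by
    intro j hj
    rcases le_or_gt j l with h | h
    · linarith [h2 j hj h]
    · rw [h1 j h]
  have hc : ∀ m : ℕ, Continuous fun p : ℝ => p * ∏ i ∈ Finset.range m, (α (i+1) - p) :=
    fun m => continuous_id.mul
      (continuous_finset_prod _ fun i _ => continuous_const.sub continuous_id)
  constructor
  · intro n hn1 hnl
    rw [hσ n, hσ (n+1)]
    apply cubeInt_mono k (hc _) (hc _)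
    intro p hp
    obtain ⟨m, rfl⟩ : ∃ m, n = m + 1 := ⟨n - 1, (Nat.succ_pred_eq_of_pos hn1).symm⟩
    simp only [Nat.add_sub_cancel]
    rw [Finset.prod_range_succ, ← mul_assoc]
    have hP : 0 ≤ ∏ i ∈ Finset.range m, (α (i+1) - p) :=
      Finset.prod_nonneg fun i _ =>
        sub_nonneg.2 (hp.2.trans (hge1 (i+1) (Nat.le_add_left 1 i)))
    apply le_mul_of_one_le_right (mul_nonneg hp.1 hP)
    have := h2 (m+1) (Nat.le_add_left 1 m) hnl
    linarith [hp.2]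
  · intro n hn
    rw [hσ n, hσ (n+1)]
    have hn1 : 1 ≤ n := le_trans (by omega) hn
    apply cubeInt_mono k (hc _) (hc _)
    intro p hp
    obtain ⟨m, rfl⟩ : ∃ m, n = m + 1 := ⟨n - 1, (Nat.succ_pred_eq_of_pos hn1).symm⟩
    simp only [Nat.add_sub_cancel]
    rw [Finset.prod_range_succ, ← mul_assoc, h1 (m+1) hn]
    have hP : 0 ≤ ∏ i ∈ Finset.range m, (α (i+1) - p) :=
      Finset.prod_nonneg fun i _ =>
        sub_nonneg.2 (hp.2.trans (hge1 (i+1) (Nat.le_add_left 1 i)))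
    apply mul_le_of_le_one_right (mul_nonneg hp.1 hP)
    linarith [hp.1]
end

section
/- For every positive integer k and every n ≥ 2, the poly-Cauchy number of the first kind c_n^{(k)} = ∫_{[0,1]^k} (x_1⋯x_k)(x_1⋯x_k − 1)⋯(x_1⋯x_k − n + 1) dx_1⋯dx_k has sign (−1)^{n−1}; i.e., (−1)^{n−1} c_n^{(k)} > 0. -/
open MeasureTheory

lemma key_alg (n : ℕ) (hn : 1 ≤ n) (p : ℝ) :
    (-1 : ℝ) ^ (n - 1) * ∏ i ∈ Finset.range n, (p - i) =
      p * ∏ i ∈ Finset.Ico 1 n, ((i : ℝ) - p) := by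
  have h0 : Finset.range n = insert 0 (Finset.Ico 1 n) := by
    rw [Finset.range_eq_Ico, show (1:ℕ) = 0 + 1 from rfl, Finset.Ico_add_one_left_eq_Ioo,
      Finset.Ioo_insert_left hn]
  have h1 : (0:ℕ) ∉ Finset.Ico 1 n := by simp
  rw [h0, Finset.prod_insert h1]
  have h2 : ∏ i ∈ Finset.Ico 1 n, ((i : ℝ) - p)
      = (-1 : ℝ) ^ (n - 1) * ∏ i ∈ Finset.Ico 1 n, (p - (i:ℝ)) := by
    have : ∀ i ∈ Finset.Ico 1 n, ((i:ℝ) - p) = (-1) * (p - (i:ℝ)) := by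
      intro i _; ring
    rw [Finset.prod_congr rfl this, Finset.prod_mul_distrib, Finset.prod_const,
      Nat.card_Ico]
  rw [h2]
  push_cast
  ring

/-- For `k ≥ 1` and `n ≥ 2`, the poly-Cauchy number of the first kind
`c n = ∫_{[0,1]^k} (p)_n` has sign `(−1)^{n−1}`. -/
theorem stmt_11 (k : ℕ) (hk : 0 < k) (n : ℕ) (hn : 2 ≤ n) :
    0 < (-1 : ℝ) ^ (n - 1) * cubeInt k (fun p => ∏ i ∈ Finset.range n, (p - i)) := by
  have hn1 : 1 ≤ n := le_trans one_le_two hn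
  unfold cubeInt
  rw [← integral_const_mul]
  have heq : ∀ x : Fin k → ℝ,
      (-1 : ℝ) ^ (n - 1) * ∏ i ∈ Finset.range n, ((∏ j, x j) - i)
        = (∏ j, x j) * ∏ i ∈ Finset.Ico 1 n, ((i : ℝ) - ∏ j, x j) :=
    fun x => key_alg n hn1 _
  simp_rw [heq]
  set s := Set.univ.pi fun _ : Fin k => Set.Icc (0:ℝ) 1 with hs_def
  set F : (Fin k → ℝ) → ℝ :=
    fun x => (∏ j, x j) * ∏ i ∈ Finset.Ico 1 n, ((i : ℝ) - ∏ j, x j) with hF_def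
  have hprod_cont : Continuous fun x : Fin k → ℝ => ∏ j, x j :=
    continuous_finset_prod _ fun i _ => continuous_apply i
  have hFcont : Continuous F := by
    apply Continuous.mul hprod_cont
    exact continuous_finset_prod _ fun i _ => (continuous_const.sub hprod_cont)
  have hscompact : IsCompact s := isCompact_univ_pi fun _ => isCompact_Icc
  have hsmeas : MeasurableSet s := MeasurableSet.univ_pi fun _ => measurableSet_Icc
  have hint : IntegrableOn F s := hFcont.continuousOn.integrableOn_compact hscompact
  have hnonneg : 0 ≤ᵐ[volume.restrict s] F := by
    refine (ae_restrict_iff' hsmeas).2 (Filter.Eventually.of_forall ?_)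
    intro x hx
    have hx0 : ∀ j, x j ∈ Set.Icc (0:ℝ) 1 := fun j => hx j (Set.mem_univ j)
    have hp0 : 0 ≤ ∏ j, x j := Finset.prod_nonneg fun j _ => (hx0 j).1
    have hp1 : ∏ j, x j ≤ 1 :=
      Finset.prod_le_one (fun j _ => (hx0 j).1) (fun j _ => (hx0 j).2)
    refine mul_nonneg hp0 (Finset.prod_nonneg fun i hi => ?_)
    have : (1:ℝ) ≤ i := by exact_mod_cast (Finset.mem_Ico.1 hi).1
    linarith
  rw [setIntegral_pos_iff_support_of_nonneg_ae hnonneg hint]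
  have hsub : (Set.univ.pi fun _ : Fin k => Set.Ioo (0:ℝ) 1) ⊆ Function.support F ∩ s := by
    intro x hx
    have hx0 : ∀ j, x j ∈ Set.Ioo (0:ℝ) 1 := fun j => hx j (Set.mem_univ j)
    have hp0 : 0 < ∏ j, x j := Finset.prod_pos fun j _ => (hx0 j).1
    have hp1 : ∏ j, x j < 1 := by
      have := Finset.prod_lt_prod_of_nonempty (f := fun j => x j) (g := fun _ => (1:ℝ))
        (fun j _ => (hx0 j).1) (fun j _ => (hx0 j).2)
        (Finset.univ_nonempty_iff.2 (Fin.pos_iff_nonempty.1 hk))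
      simpa using this
    constructor
    · simp only [Function.mem_support, hF_def]
      apply ne_of_gt
      refine mul_pos hp0 (Finset.prod_pos fun i hi => ?_)
      have : (1:ℝ) ≤ i := by exact_mod_cast (Finset.mem_Ico.1 hi).1
      linarith
    · exact fun j _ => ⟨le_of_lt (hx0 j).1, le_of_lt (hx0 j).2⟩
  have hmeas_box : volume (Set.univ.pi fun _ : Fin k => Set.Ioo (0:ℝ) 1) = 1 := by
    rw [volume_pi_pi]
    simp
  calc (0 : ENNReal) < 1 := by norm_num
    _ = volume (Set.univ.pi fun _ : Fin k => Set.Ioo (0:ℝ) 1) := hmeas_box.symm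
    _ ≤ volume (Function.support F ∩ s) := measure_mono hsub
end

section
/- For every positive integer k, the poly-Cauchy numbers of the second kind satisfy the explicit identity (−1)^n ĉ_n^{(k)} = Σ_{m=0}^n [n m] / (m+1)^k, where [n m] are the unsigned Stirling numbers of the first kind. -/
open MeasureTheory

lemma cube_measurable (k : ℕ) :
    MeasurableSet (Set.univ.pi fun _ : Fin k => Set.Icc (0:ℝ) 1) :=
  MeasurableSet.univ_pi fun _ => measurableSet_Icc

lemma cube_compact (k : ℕ) :
    IsCompact (Set.univ.pi fun _ : Fin k => Set.Icc (0:ℝ) 1) :=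
  isCompact_univ_pi fun _ => isCompact_Icc

lemma pow_cubeInt (k m : ℕ) :
    (∫ x : Fin k → ℝ in Set.univ.pi fun _ => Set.Icc (0:ℝ) 1, (∏ i, x i) ^ m)
      = (1 / ((m:ℝ) + 1)) ^ k := by
  have h1 : ∫ x : ℝ in Set.Icc (0:ℝ) 1, x ^ m = 1 / ((m:ℝ)+1) := by
    have := intervalIntegral.integral_of_le (f := fun x : ℝ => x ^ m) (μ := volume)
      (by norm_num : (0:ℝ) ≤ 1)
    rw [MeasureTheory.integral_Icc_eq_integral_Ioc, ← this]
    simp [integral_pow]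
  rw [← h1]
  rw [← integral_indicator (cube_measurable k)]
  have : ∀ x : Fin k → ℝ,
      (Set.univ.pi fun _ : Fin k => Set.Icc (0:ℝ) 1).indicator
        (fun x : Fin k → ℝ => (∏ i, x i) ^ m) x
        = ∏ i, (Set.Icc (0:ℝ) 1).indicator (fun y => y ^ m) (x i) := by
    intro x
    by_cases hx : x ∈ Set.univ.pi fun _ : Fin k => Set.Icc (0:ℝ) 1
    · rw [Set.indicator_of_mem hx, ← Finset.prod_pow]
      exact Finset.prod_congr rfl fun i _ =>
        (Set.indicator_of_mem (hx i (Set.mem_univ i)) _).symm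
    · rw [Set.indicator_of_notMem hx]
      have h2 : ¬ ∀ i, x i ∈ Set.Icc (0:ℝ) 1 := fun h => hx fun i _ => h i
      push_neg at h2
      obtain ⟨i, hi⟩ := h2
      exact (Finset.prod_eq_zero (Finset.mem_univ i)
        (by rw [Set.indicator_of_notMem hi])).symm
  simp_rw [this]
  rw [MeasureTheory.volume_pi (α := fun _ : Fin k => ℝ), MeasureTheory.integral_fintype_prod_eq_pow (ι := Fin k)
      ((Set.Icc (0:ℝ) 1).indicator (fun y => y ^ m))]
  rw [integral_indicator measurableSet_Icc]
  simp

/-- Explicit formula: `(−1)^n ĉ_n^{(k)} = Σ_{m=0}^n [n m]/(m+1)^k`, where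
`ĉ_n^{(k)} = (−1)^n ∫_{[0,1]^k} ⟨p⟩_n` and `S n m = [n m]` are the unsigned
Stirling numbers of the first kind, `⟨x⟩_n = Σ_m S n m x^m`. -/
theorem stmt_13 (k : ℕ) (hk : 0 < k) (S : ℕ → ℕ → ℝ)
    (hS : ∀ (n : ℕ) (x : ℝ),
      ∏ i ∈ Finset.range n, (x + i) = ∑ m ∈ Finset.range (n + 1), S n m * x ^ m)
    (n : ℕ) :
    (-1 : ℝ) ^ n *
        ((-1 : ℝ) ^ n * cubeInt k (fun p => ∏ i ∈ Finset.range n, (p + i))) =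
      ∑ m ∈ Finset.range (n + 1), S n m / ((m : ℝ) + 1) ^ k := by
  have hint : cubeInt k (fun p => ∏ i ∈ Finset.range n, (p + i))
      = ∑ m ∈ Finset.range (n + 1), S n m / ((m : ℝ) + 1) ^ k := by
    unfold cubeInt
    simp_rw [hS]
    rw [integral_finset_sum]
    · refine Finset.sum_congr rfl fun m _ => ?_
      rw [MeasureTheory.integral_const_mul, pow_cubeInt k m, div_pow, one_pow, mul_one_div]
    · intro m _
      exact (((continuous_const.mul ((continuous_finset_prod _
        (fun i _ => continuous_apply i)).pow m)).continuousOn).integrableOn_compact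
        (cube_compact k))
  rw [hint, ← mul_assoc, ← pow_add, ← two_mul, pow_mul]
  norm_num
end

section
/- Let A = (α_0, α_1, …, α_{n−1}) be reals and S_1(n,m,A) be defined by Π_{i=0}^{n−1}(t−α_i) = Σ_{m=0}^n S_1(n,m,A) t^m. Then for every positive integer k, the multiparameter-poly-Cauchy number of the second kind satisfies ĉ_{n,A}^{(k)} = ∫_{[0,1]^k} Π_{i=0}^{n−1}(−x_1⋯x_k − α_i) dx_1⋯dx_k = Σ_{m=0}^n (−1)^m S_1(n,m,A)/(m+1)^k. -/
open MeasureTheory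

lemma cubeInt_pow (k m : ℕ) : cubeInt k (fun p => p ^ m) = (1 / ((m : ℝ) + 1)) ^ k := by
  unfold cubeInt
  rw [← integral_indicator (MeasurableSet.univ_pi fun _ => measurableSet_Icc)]
  have h : ∀ x : Fin k → ℝ,
      (Set.univ.pi fun _ => Set.Icc (0:ℝ) 1).indicator (fun x : Fin k → ℝ => (∏ i, x i) ^ m) x
        = ∏ i, (Set.Icc (0:ℝ) 1).indicator (fun t => t ^ m) (x i) := by
    intro x
    by_cases hx : x ∈ Set.univ.pi fun _ => Set.Icc (0:ℝ) 1
    · rw [Set.indicator_of_mem hx, ← Finset.prod_pow]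
      exact Finset.prod_congr rfl fun i _ =>
        (Set.indicator_of_mem (hx i (Set.mem_univ i)) _).symm
    · rw [Set.indicator_of_notMem hx]
      rw [Set.mem_univ_pi] at hx
      push_neg at hx
      obtain ⟨i, hi⟩ := hx
      exact (Finset.prod_eq_zero (Finset.mem_univ i)
        (Set.indicator_of_notMem hi _)).symm
  simp_rw [h]
  rw [MeasureTheory.integral_fintype_prod_volume_eq_pow
    ((Set.Icc (0:ℝ) 1).indicator fun t => t ^ m), Fintype.card_fin]
  congr 1
  rw [integral_indicator measurableSet_Icc, MeasureTheory.integral_Icc_eq_integral_Ioc,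
    ← intervalIntegral.integral_of_le (by norm_num : (0:ℝ) ≤ 1), integral_pow]
  simp

/-- Multiparameter Stirling numbers of the first kind `S m` defined by
`Π_{i<n} (t − α i) = Σ_{m≤n} S m * t^m`; then
`ĉ_{n,A}^{(k)} = ∫_{[0,1]^k} Π_{i<n}(−p − α i) = Σ_{m≤n} (−1)^m S m/(m+1)^k`. -/
theorem stmt_16 (k : ℕ) (hk : 0 < k) (n : ℕ) (α : ℕ → ℝ) (S : ℕ → ℝ)
    (hS : ∀ t : ℝ,
      ∏ i ∈ Finset.range n, (t - α i) = ∑ m ∈ Finset.range (n + 1), S m * t ^ m) :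
    cubeInt k (fun p => ∏ i ∈ Finset.range n, (-p - α i)) =
      ∑ m ∈ Finset.range (n + 1), (-1 : ℝ) ^ m * S m / ((m : ℝ) + 1) ^ k := by
  have hrw : (fun p : ℝ => ∏ i ∈ Finset.range n, (-p - α i))
      = fun p : ℝ => ∑ m ∈ Finset.range (n + 1), S m * (-1 : ℝ) ^ m * p ^ m := by
    funext p
    rw [hS (-p)]
    exact Finset.sum_congr rfl fun m _ => by rw [neg_pow]; ring
  rw [hrw]
  unfold cubeInt
  have hint : ∀ m : ℕ, IntegrableOn (fun x : Fin k → ℝ => (∏ i, x i) ^ m)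
      (Set.univ.pi fun _ => Set.Icc (0:ℝ) 1) := by
    intro m
    exact ((continuous_finset_prod Finset.univ fun i _ => continuous_apply i).pow m
      ).continuousOn.integrableOn_compact (isCompact_univ_pi fun _ => isCompact_Icc)
  rw [integral_finset_sum _ fun m _ => ((hint m).const_mul _)]
  refine Finset.sum_congr rfl fun m _ => ?_
  rw [MeasureTheory.integral_const_mul]
  have := cubeInt_pow k m
  unfold cubeInt at this
  rw [this, div_pow, one_pow]
  ring
end
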